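/- arXiv:1101.0352 — 2 statements merged into one kernel-verified Lean document; each statement's English description precedes it below -/
import Mathlib

section
/- Let n ≥ 1, S = ℚ[x_1,…,x_n], and let M_n ⊆ S^{n+1} be the spline module of the fan P_2(A_n). For every k ≥ 0, the ℚ-vector space of elements of M_n that are homogeneous of degree k has dimension ∑_{i=0}^{min(k,n)} C(k − i + n − 1, n − 1) (binomial coefficients); equivalently, the Hilbert series of M_n is (∑_{i=0}^{n} t^i)/(1 − t)^n, which equals the Hilbert series (1 − t^{n+1})/(1 − t)^{n+1} of the Stanley–Reisner ring ℚ[y_0,…,y_n]/⟨y_0⋯y_n⟩. -/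
open MvPolynomial

/-- The ring `S = ℚ[x_1,…,x_n]`. -/
abbrev S (n : ℕ) : Type := MvPolynomial (Fin n) ℚ

/-- The Billera–Rose spline module `M_n = C^0(P_2(A_n)) ⊆ S^{n+1}`: tuples
`(f_0, f_1, …, f_n)` with `x_i ∣ f_0 - f_i` for `1 ≤ i ≤ n` and
`x_i - x_j ∣ f_i - f_j` for `1 ≤ i < j ≤ n`. -/
noncomputable def splineModule (n : ℕ) : Submodule (S n) (Fin (n + 1) → S n) where
  carrier := {f | (∀ i : Fin n, X i ∣ f 0 - f i.succ) ∧
    ∀ i j : Fin n, i < j → (X i - X j) ∣ f i.succ - f j.succ}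
  add_mem' := by
    rintro a b ⟨ha1, ha2⟩ ⟨hb1, hb2⟩
    refine ⟨fun i => ?_, fun i j hij => ?_⟩
    · simpa [sub_add_sub_comm] using dvd_add (ha1 i) (hb1 i)
    · simpa [sub_add_sub_comm] using dvd_add (ha2 i j hij) (hb2 i j hij)
  zero_mem' := by
    refine ⟨fun i => ?_, fun i j _ => ?_⟩ <;> simp
  smul_mem' := by
    rintro c f ⟨h1, h2⟩
    refine ⟨fun i => ?_, fun i j hij => ?_⟩
    · simpa [smul_eq_mul, mul_sub] using (h1 i).mul_left c
    · simpa [smul_eq_mul, mul_sub] using (h2 i j hij).mul_left c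


/-- The `ℚ`-vector space of elements of the spline module `M_n = C^0(P_2(A_n))` all of
whose `n+1` components are homogeneous polynomials of degree `k` (or zero). -/
noncomputable def splineHomPart (n k : ℕ) : Submodule ℚ (Fin (n + 1) → S n) :=
  (Submodule.restrictScalars ℚ (splineModule n)) ⊓
    Submodule.pi Set.univ (fun _ : Fin (n + 1) => homogeneousSubmodule (Fin n) ℚ k)

theorem dvd_sub_aeval {n : ℕ} (g : Fin n → S n) (d : S n)
    (h : ∀ l, d ∣ X l - g l) (f : S n) : d ∣ f - aeval g f := by
  induction f using MvPolynomial.induction_on with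
  | C a => simp
  | add p q hp hq =>
      rw [map_add]
      have : p + q - (aeval g p + aeval g q) = (p - aeval g p) + (q - aeval g q) := by ring
      rw [this]; exact dvd_add hp hq
  | mul_X p l hp =>
      rw [map_mul, aeval_X]
      have : p * X l - aeval g p * g l
          = (p - aeval g p) * X l + aeval g p * (X l - g l) := by ring
      rw [this]; exact dvd_add (hp.mul_right _) ((h l).mul_left _)

theorem X_sub_dvd_iff {n : ℕ} (j : Fin n) (v : S n)
    (hv : aeval (Function.update X j v) v = v) (f : S n) :
    (X j - v) ∣ f ↔ aeval (Function.update X j v) f = 0 := by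
  constructor
  · rintro ⟨q, rfl⟩
    rw [map_mul, map_sub, aeval_X, Function.update_self, hv, sub_self, zero_mul]
  · intro h
    have := dvd_sub_aeval (Function.update X j v) (X j - v) (fun l => ?_) f
    · rwa [h, sub_zero] at this
    · rcases eq_or_ne l j with rfl | hl
      · rw [Function.update_self]
      · rw [Function.update_of_ne hl, sub_self]; exact dvd_zero _

theorem X_dvd_iff' {n : ℕ} (i : Fin n) (f : S n) :
    X i ∣ f ↔ aeval (Function.update X i (0 : S n)) f = 0 := by
  have := X_sub_dvd_iff i (0 : S n) (map_zero _) f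
  rwa [sub_zero] at this

theorem X_sub_X_dvd_iff {n : ℕ} {l i : Fin n} (h : l ≠ i) (f : S n) :
    (X l - X i) ∣ f ↔ aeval (Function.update X l (X i : S n)) f = 0 :=
  X_sub_dvd_iff l (X i) (by rw [aeval_X, Function.update_of_ne (Ne.symm h)]) f

theorem prod_sub_dvd {n : ℕ} (i0 : Fin n) (s : Finset (Fin n)) (hs : i0 ∉ s) (g : S n)
    (hg : ∀ l ∈ s, (X l - X i0) ∣ g) : (∏ l ∈ s, (X l - X i0)) ∣ g := by
  induction s using Finset.induction generalizing g with
  | empty => simpa using one_dvd g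
  | @insert l s hl ih =>
      have hli : l ≠ i0 := fun h => hs (h ▸ Finset.mem_insert_self l s)
      obtain ⟨h1, rfl⟩ := hg l (Finset.mem_insert_self l s)
      have hs' : i0 ∉ s := fun h => hs (Finset.mem_insert_of_mem h)
      have key : ∀ l' ∈ s, (X l' - X i0) ∣ h1 := by
        intro l' hl'
        have hne : l' ≠ i0 := fun h => hs' (h ▸ hl')
        have hne2 : l ≠ l' := fun h => hl (h ▸ hl')
        have hdvd : (X l' - X i0) ∣ (X l - X i0) * h1 :=
          hg l' (Finset.mem_insert_of_mem hl')
        rw [X_sub_X_dvd_iff hne] at hdvd ⊢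
        rw [map_mul, map_sub, aeval_X, aeval_X, Function.update_of_ne hne2,
          Function.update_of_ne (Ne.symm hne)] at hdvd
        rcases mul_eq_zero.mp hdvd with h0 | h0
        · exact absurd (sub_eq_zero.mp h0) (X_injective.ne hli)
        · exact h0
      rw [Finset.prod_insert hl]
      exact mul_dvd_mul_left _ (ih hs' h1 key)

/-- generators -/
noncomputable def gen (n m : ℕ) : Fin (n + 1) → S n :=
  Fin.cons (if m = 0 then 1 else 0)
    (fun i : Fin n => if m = 0 then 1 else
      X i * ∏ l ∈ Finset.univ.filter (fun l : Fin n => (l : ℕ) + 1 < m), (X l - X i))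

theorem mem_splineModule {n : ℕ} (f : Fin (n + 1) → S n) :
    f ∈ splineModule n ↔ ((∀ i : Fin n, X i ∣ f 0 - f i.succ) ∧
      ∀ i j : Fin n, i < j → (X i - X j) ∣ f i.succ - f j.succ) := Iff.rfl

theorem gen_mem_spline (n m : ℕ) : gen n m ∈ splineModule n := by
  rw [mem_splineModule]
  rcases Nat.eq_zero_or_pos m with rfl | hm
  · constructor
    · intro i; simp [gen]
    · intro i j _; simp [gen]
  have hm0 : m ≠ 0 := hm.ne'
  set s := Finset.univ.filter (fun l : Fin n => (l : ℕ) + 1 < m) with hs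
  constructor
  · intro i
    simp only [gen, Fin.cons_zero, Fin.cons_succ, if_neg hm0, zero_sub, dvd_neg]
    exact dvd_mul_right _ _
  · intro i j _
    simp only [gen, Fin.cons_succ, if_neg hm0]
    have hq : ∀ a : Fin n, X a * ∏ l ∈ s, (X l - X a) =
        Polynomial.eval (X a : S n)
          (Polynomial.X * ∏ l ∈ s, (Polynomial.C (X l : S n) - Polynomial.X)) := by
      intro a
      simp [Polynomial.eval_prod]
    rw [hq i, hq j]
    exact Polynomial.sub_dvd_eval_sub _ _ _

theorem gen_zero_of_lt {n m : ℕ} (j : Fin (n + 1)) (hj : (j : ℕ) < m) : gen n m j = 0 := by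
  have hm0 : m ≠ 0 := by omega
  induction j using Fin.cases with
  | zero => simp [gen, hm0]
  | succ i =>
      simp only [gen, Fin.cons_succ, if_neg hm0]
      have hi : i ∈ Finset.univ.filter (fun l : Fin n => (l : ℕ) + 1 < m) := by
        simp only [Finset.mem_filter, Finset.mem_univ, true_and]
        simpa using hj
      rw [Finset.prod_eq_zero hi (by rw [sub_self]), mul_zero]

theorem card_filter_fin_lt {n c : ℕ} (hc : c ≤ n) :
    (Finset.univ.filter (fun l : Fin n => (l : ℕ) + 1 < c + 1)).card = c := by
  have : (Finset.univ.filter (fun l : Fin n => (l : ℕ) + 1 < c + 1)) =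
      Finset.attachFin (Finset.range c)
        (fun m hm => lt_of_lt_of_le (Finset.mem_range.mp hm) hc) := by
    ext a
    simp [Nat.succ_lt_succ_iff]
  rw [this, Finset.card_attachFin, Finset.card_range]

theorem gen_homog {n m : ℕ} (hm : m ≤ n) (j : Fin (n + 1)) :
    (gen n m j).IsHomogeneous m := by
  rcases Nat.eq_zero_or_pos m with rfl | hmpos
  · induction j using Fin.cases with
    | zero => simpa [gen] using isHomogeneous_one (Fin n) ℚ
    | succ i => simpa [gen] using isHomogeneous_one (Fin n) ℚ
  have hm0 : m ≠ 0 := hmpos.ne'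
  induction j using Fin.cases with
  | zero => simp only [gen, Fin.cons_zero, if_neg hm0]; exact isHomogeneous_zero _ _ _
  | succ i =>
      simp only [gen, Fin.cons_succ, if_neg hm0]
      have hprod : (∏ l ∈ Finset.univ.filter (fun l : Fin n => (l : ℕ) + 1 < m),
          ((X l : S n) - X i)).IsHomogeneous (m - 1) := by
        have := IsHomogeneous.prod (Finset.univ.filter (fun l : Fin n => (l : ℕ) + 1 < m))
          (fun l => (X l : S n) - X i) (fun _ => 1)
          (fun l _ => (isHomogeneous_X ℚ l).sub (isHomogeneous_X ℚ i))
        have hcard : (Finset.univ.filter (fun l : Fin n => (l : ℕ) + 1 < m)).card = m - 1 := by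
          have h2 := card_filter_fin_lt (n := n) (c := m - 1) (by omega)
          simpa [show m - 1 + 1 = m by omega] using h2
        rwa [Finset.sum_const, smul_eq_mul, mul_one, hcard] at this
      have := (isHomogeneous_X ℚ i).mul hprod
      rwa [show 1 + (m - 1) = m by omega] at this

theorem gen_self_ne_zero {n m : ℕ} (hm : m ≤ n) (h : m < n + 1) :
    gen n m ⟨m, h⟩ ≠ 0 := by
  rcases Nat.eq_zero_or_pos m with rfl | hmpos
  · rw [show (⟨0, h⟩ : Fin (n + 1)) = 0 from rfl]
    simp [gen]
  have hm0 : m ≠ 0 := hmpos.ne'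
  have hi0 : m - 1 < n := by omega
  have hsucc : (⟨m, h⟩ : Fin (n + 1)) = Fin.succ ⟨m - 1, hi0⟩ := by
    apply Fin.ext; simp; omega
  rw [hsucc]
  simp only [gen, Fin.cons_succ, if_neg hm0]
  apply mul_ne_zero (X_ne_zero _)
  rw [Finset.prod_ne_zero_iff]
  intro l hl
  have hl' : (l : ℕ) + 1 < m := (Finset.mem_filter.mp hl).2
  refine sub_ne_zero.mpr (fun hXeq => ?_)
  have : l = ⟨m - 1, hi0⟩ := X_injective hXeq
  rw [Fin.ext_iff] at this
  simp at this
  omega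

theorem exists_homog_factor {n k m : ℕ} {p f : S n} (hp : p.IsHomogeneous m)
    (hf : f.IsHomogeneous k) (hd : p ∣ f) :
    ∃ c : S n, c.IsHomogeneous (k - m) ∧ f = p * c ∧ (k < m → c = 0) := by
  obtain ⟨c0, rfl⟩ := hd
  have hsum : p * c0 = ∑ e ∈ Finset.range (c0.totalDegree + 1),
      p * homogeneousComponent e c0 := by
    rw [← Finset.mul_sum, sum_homogeneousComponent]
  have hcomp : p * c0 = ∑ e ∈ Finset.range (c0.totalDegree + 1),
      (if k = m + e then p * homogeneousComponent e c0 else 0) := by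
    have h0 : p * c0 = homogeneousComponent k (p * c0) := by
      rw [homogeneousComponent_of_mem ((mem_homogeneousSubmodule k _).mpr hf), if_pos rfl]
    rw [h0]
    conv_lhs => rw [hsum]
    rw [map_sum]
    refine Finset.sum_congr rfl (fun e _ => ?_)
    exact homogeneousComponent_of_mem
      ((mem_homogeneousSubmodule _ _).mpr (hp.mul (homogeneousComponent_isHomogeneous e c0)))
  by_cases hmk : m ≤ k
  · refine ⟨homogeneousComponent (k - m) c0, homogeneousComponent_isHomogeneous _ _, ?_,
      fun hlt => absurd hmk (by omega)⟩
    have hrw : ∀ e ∈ Finset.range (c0.totalDegree + 1),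
        (if k = m + e then p * homogeneousComponent e c0 else 0) =
          (if e = k - m then p * homogeneousComponent e c0 else 0) := by
      intro e _
      exact if_congr (by omega) rfl rfl
    rw [Finset.sum_congr rfl hrw, Finset.sum_ite_eq'] at hcomp
    by_cases hin : k - m ∈ Finset.range (c0.totalDegree + 1)
    · rwa [if_pos hin] at hcomp
    · rw [if_neg hin] at hcomp
      rw [homogeneousComponent_eq_zero, mul_zero]
      · exact hcomp
      · simp only [Finset.mem_range] at hin; omega
  · refine ⟨0, isHomogeneous_zero _ _ _, ?_, fun _ => rfl⟩
    rw [mul_zero, hcomp]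
    exact Finset.sum_eq_zero (fun e _ => if_neg (by omega))

theorem gen_dvd_comp {n m : ℕ} (hmn : m ≤ n) (h : m < n + 1)
    {f : Fin (n + 1) → S n} (hf : f ∈ splineModule n)
    (hz : ∀ j : Fin (n + 1), (j : ℕ) < m → f j = 0) :
    gen n m ⟨m, h⟩ ∣ f ⟨m, h⟩ := by
  rcases Nat.eq_zero_or_pos m with rfl | hmpos
  · rw [show (⟨0, h⟩ : Fin (n + 1)) = 0 from rfl]
    simpa [gen] using one_dvd (f 0)
  have hm0 : m ≠ 0 := hmpos.ne'
  set i0 : Fin n := ⟨m - 1, by omega⟩ with hi0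
  have hms : (⟨m, h⟩ : Fin (n + 1)) = i0.succ := by apply Fin.ext; simp [hi0]; omega
  obtain ⟨h1, h2⟩ := (mem_splineModule f).mp hf
  have hz0 : f 0 = 0 := hz 0 (by simpa using hmpos)
  have hXdvd : X i0 ∣ f i0.succ := by
    have := h1 i0
    rw [hz0, zero_sub, dvd_neg] at this
    exact this
  set s := Finset.univ.filter (fun l : Fin n => (l : ℕ) + 1 < m) with hsdef
  have hldvd : ∀ l ∈ s, (X l - X i0) ∣ f i0.succ := by
    intro l hl
    have hl' : (l : ℕ) + 1 < m := (Finset.mem_filter.mp hl).2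
    have hfl : f l.succ = 0 := hz l.succ (by simp; omega)
    have := h2 l i0 (by rw [Fin.lt_def]; simp [hi0]; omega)
    rw [hfl, zero_sub, dvd_neg] at this
    exact this
  have hs : i0 ∉ s := by simp [hsdef, hi0]; omega
  obtain ⟨c, hc⟩ := prod_sub_dvd i0 s hs _ hldvd
  have hXc : X i0 ∣ c := by
    have h0 : aeval (Function.update X i0 (0 : S n)) (f i0.succ) = 0 :=
      (X_dvd_iff' i0 _).mp hXdvd
    rw [hc, map_mul, map_prod] at h0
    have hcongr : ∀ l ∈ s, aeval (Function.update X i0 (0 : S n)) ((X l : S n) - X i0)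
        = X l := by
      intro l hl
      have hne : l ≠ i0 := fun he => hs (he ▸ hl)
      rw [map_sub, aeval_X, aeval_X, Function.update_self, Function.update_of_ne hne, sub_zero]
    rw [Finset.prod_congr rfl hcongr] at h0
    have hprod_ne : (∏ l ∈ s, (X l : S n)) ≠ 0 :=
      Finset.prod_ne_zero_iff.mpr fun l _ => X_ne_zero l
    rcases mul_eq_zero.mp h0 with h0 | h0
    · exact absurd h0 hprod_ne
    · exact (X_dvd_iff' i0 c).mpr h0
  obtain ⟨c2, rfl⟩ := hXc
  refine ⟨c2, ?_⟩
  rw [hms, hc]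
  simp only [gen, Fin.cons_succ, if_neg hm0, ← hsdef]
  ring

theorem mem_splineHomPart {n k : ℕ} (f : Fin (n + 1) → S n) :
    f ∈ splineHomPart n k ↔ f ∈ splineModule n ∧ ∀ j, (f j).IsHomogeneous k := by
  simp [splineHomPart, Submodule.mem_inf, Submodule.restrictScalars_mem, Submodule.mem_pi,
    mem_homogeneousSubmodule]

theorem smul_gen_mem {n k m : ℕ} (hmn : m ≤ n) (hmk : m ≤ k) {c : S n}
    (hc : c.IsHomogeneous (k - m)) : c • gen n m ∈ splineHomPart n k := by
  rw [mem_splineHomPart]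
  refine ⟨(splineModule n).smul_mem c (gen_mem_spline n m), fun j => ?_⟩
  have := hc.mul (gen_homog hmn j)
  rw [show k - m + m = k by omega] at this
  simpa [Pi.smul_apply, smul_eq_mul] using this

def genSet (n k m : ℕ) : Set (Fin (n + 1) → S n) :=
  {v | ∃ l : ℕ, m ≤ l ∧ l ≤ n ∧ l ≤ k ∧ ∃ c : S n, c.IsHomogeneous (k - l) ∧ v = c • gen n l}

theorem genSet_anti {n k m : ℕ} : genSet n k (m + 1) ⊆ genSet n k m := by
  rintro v ⟨l, h1, h⟩
  exact ⟨l, by omega, h⟩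

theorem mem_span_genSet {n k : ℕ} : ∀ (t m : ℕ), n + 1 ≤ m + t →
    ∀ f, f ∈ splineHomPart n k → (∀ j : Fin (n + 1), (j : ℕ) < m → f j = 0) →
    f ∈ Submodule.span ℚ (genSet n k m) := by
  intro t
  induction t with
  | zero =>
      intro m hmt f hf hz
      have : f = 0 := funext fun j => hz j (by omega)
      simp [this]
  | succ t ih =>
      intro m hmt f hf hz
      by_cases hmn : m ≤ n
      swap
      · have : f = 0 := funext fun j => hz j (by have := j.2; omega)
        simp [this]
      obtain ⟨hfs, hfh⟩ := (mem_splineHomPart f).mp hf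
      have h : m < n + 1 := by omega
      have hdvd := gen_dvd_comp hmn h hfs hz
      obtain ⟨c, hc, hEq, hc0⟩ :=
        exists_homog_factor (gen_homog hmn ⟨m, h⟩) (hfh ⟨m, h⟩) hdvd
      by_cases hmk : m ≤ k
      · have hgenmem := smul_gen_mem hmn hmk hc
        have hf'mem : f - c • gen n m ∈ splineHomPart n k :=
          Submodule.sub_mem _ hf hgenmem
        have hz' : ∀ j : Fin (n + 1), (j : ℕ) < m + 1 → (f - c • gen n m) j = 0 := by
          intro j hj
          rcases Nat.lt_or_ge (j : ℕ) m with hjm | hjm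
          · simp [hz j hjm, gen_zero_of_lt j hjm]
          · have hjeq : j = ⟨m, h⟩ := Fin.ext (by simp only [Fin.val_mk]; omega)
            rw [hjeq]
            simp only [Pi.sub_apply, Pi.smul_apply, smul_eq_mul, hEq]
            ring
        have hspan := ih (m + 1) (by omega) _ hf'mem hz'
        have hsub : f = (f - c • gen n m) + c • gen n m := by ring
        rw [hsub]
        exact Submodule.add_mem _ (Submodule.span_mono genSet_anti hspan)
          (Submodule.subset_span ⟨m, le_refl m, hmn, hmk, c, hc, rfl⟩)
      · have hfm0 : f ⟨m, h⟩ = 0 := by rw [hEq, hc0 (by omega), mul_zero]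
        have hz' : ∀ j : Fin (n + 1), (j : ℕ) < m + 1 → f j = 0 := by
          intro j hj
          rcases Nat.lt_or_ge (j : ℕ) m with hjm | hjm
          · exact hz j hjm
          · have hjeq : j = ⟨m, h⟩ := Fin.ext (by simp only [Fin.val_mk]; omega)
            rw [hjeq]; exact hfm0
        exact Submodule.span_mono genSet_anti (ih (m + 1) (by omega) f hf hz')

noncomputable def homEquivSym (n k : ℕ) :
    {d : Fin n →₀ ℕ // d.degree = k} ≃ Sym (Fin n) k :=
  (Multiset.toFinsupp (α := Fin n)).symm.toEquiv.subtypeEquiv fun d => by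
    simp only [AddEquiv.toEquiv_eq_coe, EquivLike.coe_coe, Multiset.toFinsupp_symm_apply]
    rw [Finsupp.degree, show (Multiset.card (Finsupp.toMultiset d)) = d.sum fun _ => id from
      Finsupp.card_toMultiset d, Finsupp.sum]
    rfl

noncomputable instance homFintype (n k : ℕ) : Fintype {d : Fin n →₀ ℕ // d.degree = k} :=
  Fintype.ofEquiv _ (homEquivSym n k).symm

noncomputable def homBasis (n k : ℕ) :
    Module.Basis {d : Fin n →₀ ℕ // d.degree = k} ℚ (homogeneousSubmodule (Fin n) ℚ k) := by
  rw [show homogeneousSubmodule (Fin n) ℚ k = restrictSupport ℚ {d | d.degree = k} from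
    homogeneousSubmodule_eq_finsupp_supported (σ := Fin n) (R := ℚ) k]
  exact basisRestrictSupport ℚ _

noncomputable instance homFinite (n k : ℕ) :
    Module.Finite ℚ (homogeneousSubmodule (Fin n) ℚ k) :=
  Module.Finite.of_basis (homBasis n k)

noncomputable instance homFree (n k : ℕ) :
    Module.Free ℚ (homogeneousSubmodule (Fin n) ℚ k) :=
  Module.Free.of_basis (homBasis n k)

theorem finrank_homog (n k : ℕ) :
    Module.finrank ℚ (homogeneousSubmodule (Fin n) ℚ k) = (n + k - 1).choose k := by
  rw [Module.finrank_eq_card_basis (homBasis n k), Fintype.card_congr (homEquivSym n k),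
    Sym.card_sym_eq_choose, Fintype.card_fin]

noncomputable def Phi (n k : ℕ) :
    (∀ m : Fin (min k n + 1), homogeneousSubmodule (Fin n) ℚ (k - (m : ℕ))) →ₗ[ℚ]
      (Fin (n + 1) → S n) where
  toFun c := ∑ m : Fin (min k n + 1), ((c m : S n) • gen n (m : ℕ))
  map_add' a b := by
    simp only [Pi.add_apply, Submodule.coe_add, add_smul]
    rw [Finset.sum_add_distrib]
  map_smul' q a := by
    simp only [Pi.smul_apply, SetLike.val_smul, RingHom.id_apply]
    rw [Finset.smul_sum]
    exact Finset.sum_congr rfl fun m _ => smul_assoc q _ _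

theorem range_Phi (n k : ℕ) : LinearMap.range (Phi n k) = splineHomPart n k := by
  apply le_antisymm
  · rintro _ ⟨c, rfl⟩
    show (∑ m : Fin (min k n + 1), ((c m : S n) • gen n (m : ℕ))) ∈ splineHomPart n k
    refine Submodule.sum_mem _ fun m _ => ?_
    have hm : (m : ℕ) ≤ min k n := Nat.lt_succ_iff.mp m.2
    exact smul_gen_mem (le_trans hm (min_le_right k n)) (le_trans hm (min_le_left k n))
      ((mem_homogeneousSubmodule _ _).mp (c m).2)
  · intro f hf
    have hspan := mem_span_genSet (n + 1) 0 (by omega) f hf (fun j hj => absurd hj (by omega))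
    refine Submodule.span_le.mpr ?_ hspan
    rintro v ⟨l, _, hln, hlk, c, hc, rfl⟩
    have hl : l < min k n + 1 := by omega
    refine ⟨Pi.single ⟨l, hl⟩ ⟨c, (mem_homogeneousSubmodule _ _).mpr hc⟩, ?_⟩
    simp only [Phi, LinearMap.coe_mk, AddHom.coe_mk]
    rw [Finset.sum_eq_single (⟨l, hl⟩ : Fin (min k n + 1))]
    · rw [Pi.single_eq_same]
    · intro b _ hb
      rw [Pi.single_eq_of_ne hb, ZeroMemClass.coe_zero, zero_smul]
    · intro habs
      exact absurd (Finset.mem_univ _) habs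

theorem Phi_inj (n k : ℕ) : Function.Injective (Phi n k) := by
  rw [← LinearMap.ker_eq_bot]
  rw [LinearMap.ker_eq_bot']
  intro c hc
  have claim : ∀ M : ℕ, ∀ m : Fin (min k n + 1), (m : ℕ) = M → c m = 0 := by
    intro M
    induction M using Nat.strong_induction_on with
    | _ M ih =>
      intro m hm
      have hmle : (m : ℕ) ≤ min k n := Nat.lt_succ_iff.mp m.2
      have hMn : M < n + 1 := by omega
      have h0 : (∑ m' : Fin (min k n + 1), ((c m' : S n) • gen n (m' : ℕ))) ⟨M, hMn⟩ = 0 := by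
        rw [show (∑ m' : Fin (min k n + 1), ((c m' : S n) • gen n (m' : ℕ))) = Phi n k c
          from rfl, hc]
        rfl
      rw [Finset.sum_apply] at h0
      rw [Finset.sum_eq_single m] at h0
      · simp only [Pi.smul_apply, smul_eq_mul] at h0
        rcases mul_eq_zero.mp h0 with h1 | h1
        · exact Subtype.ext h1
        · rw [hm] at h1
          exact absurd h1 (gen_self_ne_zero (by omega) hMn)
      · intro b _ hb
        rcases Nat.lt_trichotomy (b : ℕ) M with hbM | hbM | hbM
        · rw [ih (b : ℕ) hbM b rfl]
          simp
        · exact absurd (Fin.ext (by omega) : b = m) hb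
        · rw [Pi.smul_apply, gen_zero_of_lt ⟨M, hMn⟩ (by simpa using hbM), smul_zero]
      · intro habs
        exact absurd (Finset.mem_univ _) habs
  funext m
  exact claim (m : ℕ) m rfl

theorem spline_hilbert_function' (n : ℕ) (hn : 1 ≤ n) (k : ℕ) :
    Module.finrank ℚ (splineHomPart n k) =
      ∑ i ∈ Finset.range (min k n + 1), Nat.choose (k - i + n - 1) (n - 1) := by
  have e : (∀ m : Fin (min k n + 1), homogeneousSubmodule (Fin n) ℚ (k - (m : ℕ))) ≃ₗ[ℚ]
      splineHomPart n k :=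
    (LinearEquiv.ofInjective (Phi n k) (Phi_inj n k)).trans
      (LinearEquiv.ofEq _ _ (range_Phi n k))
  rw [← LinearEquiv.finrank_eq e, Module.finrank_pi_fintype,
    ← Fin.sum_univ_eq_sum_range (fun i => Nat.choose (k - i + n - 1) (n - 1))]
  refine Finset.sum_congr rfl fun m _ => ?_
  rw [finrank_homog]
  have hmk : (m : ℕ) ≤ k := le_trans (Nat.lt_succ_iff.mp m.2) (min_le_left k n)
  set d := k - (m : ℕ) with hd
  rw [show k - (m : ℕ) + n - 1 = n + d - 1 by omega,
    show n - 1 = (n + d - 1) - d by omega]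
  exact (Nat.choose_symm (by omega)).symm


/-- **Theorem (Hilbert function of `C^0(P_2(A_n))`)**: for every `k ≥ 0`, the dimension
of the space of homogeneous degree-`k` splines on `P_2(A_n)` is
`∑_{i=0}^{min(k,n)} C(k-i+n-1, n-1)`; equivalently the Hilbert series of `M_n` is
`(∑_{i=0}^n t^i)/(1-t)^n = (1-t^{n+1})/(1-t)^{n+1}`, the Hilbert series of the
Stanley–Reisner ring `ℚ[y_0,…,y_n]/⟨y_0⋯y_n⟩`. -/
theorem spline_hilbert_function (n : ℕ) (hn : 1 ≤ n) (k : ℕ) :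
    Module.finrank ℚ (splineHomPart n k) =
      ∑ i ∈ Finset.range (min k n + 1), Nat.choose (k - i + n - 1) (n - 1) :=
  spline_hilbert_function' n hn k
end

section
/- Let n ≥ 1, S = ℚ[x_1,…,x_n], and let D_n ⊆ Der_ℚ(S) be the module of logarithmic derivations of the essential braid arrangement. Then the derivations θ_k = ∑_{i=1}^{n} x_i^k ∂/∂x_i for k = 1, …, n (i.e., the derivations determined by θ_k(x_i) = x_i^k) belong to D_n and form an S-basis of D_n; in particular D_n is a free S-module of rank n with homogeneous generators in degrees 1, 2, …, n, so the essential braid arrangement A_n ⊆ ℚ^n is free with exponents {1, 2, …, n}. -/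
open MvPolynomial

open Matrix Finset

set_option linter.unnecessarySimpa false

section DetDvd

variable {R m : Type*} [CommRing R] [Fintype m] [DecidableEq m]

lemma dvd_det_of_dvd_row (M : Matrix m m R) (r : m) {d : R}
    (h : ∀ c, d ∣ M r c) : d ∣ M.det := by
  rw [Matrix.det_apply']
  refine Finset.dvd_sum fun σ _ => ?_
  refine Dvd.dvd.mul_left ?_ _
  refine dvd_trans ?_ (Finset.dvd_prod_of_mem (fun i => M (σ i) i) (Finset.mem_univ (σ⁻¹ r)))
  simpa [Equiv.Perm.inv_def, Equiv.apply_symm_apply] using h (σ⁻¹ r)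

lemma dvd_det_of_dvd_rows_sub (M : Matrix m m R) {i j : m} (hij : i ≠ j) {d : R}
    (h : ∀ c, d ∣ M i c - M j c) : d ∣ M.det := by
  rw [← Matrix.det_updateRow_add_smul_self M hij (-1)]
  refine dvd_det_of_dvd_row _ i fun c => ?_
  rw [Matrix.updateRow_self]
  simpa [sub_eq_add_neg] using h c

end DetDvd

lemma prod_primes_dvd' {R ι : Type*} [CommRing R] (f : ι → R) :
    ∀ s : Finset ι, (∀ i ∈ s, Prime (f i)) → (∀ i ∈ s, ∀ j ∈ s, i ≠ j → ¬ f i ∣ f j) →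
      ∀ z : R, (∀ i ∈ s, f i ∣ z) → (∏ i ∈ s, f i) ∣ z := by
  classical
  intro s
  induction s using Finset.induction_on with
  | empty => intro _ _ z _; simpa using one_dvd z
  | @insert a s ha ih =>
    intro hp hnd z hd
    obtain ⟨w, hw⟩ := hd a (Finset.mem_insert_self a s)
    rw [Finset.prod_insert ha, hw]
    refine mul_dvd_mul_left _ (ih (fun i hi => hp i (Finset.mem_insert_of_mem hi))
      (fun i hi j hj hij => hnd i (Finset.mem_insert_of_mem hi) j (Finset.mem_insert_of_mem hj) hij)
      w (fun i hi => ?_))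
    have hi' := hd i (Finset.mem_insert_of_mem hi)
    rw [hw] at hi'
    rcases (hp i (Finset.mem_insert_of_mem hi)).2.2 _ _ hi' with h | h
    · exact absurd h (hnd i (Finset.mem_insert_of_mem hi) a (Finset.mem_insert_self a s)
        (by rintro rfl; exact ha hi))
    · exact h

lemma prime_X_mv {n : ℕ} (i : Fin n) : Prime (X i : S n) := by
  have hn : n ≠ 0 := by rintro rfl; exact i.elim0
  obtain ⟨m, rfl⟩ : ∃ m, n = m + 1 := ⟨n - 1, by omega⟩
  let e := (renameEquiv ℚ (Equiv.swap i 0)).trans (finSuccEquiv ℚ m)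
  have he : e (X i) = Polynomial.X := by
    simp [e, renameEquiv_apply, rename_X, Equiv.swap_apply_left, finSuccEquiv_X_zero]
  have hp : Prime (e (X i)) := he ▸ Polynomial.prime_X
  exact (MulEquiv.prime_iff e.toRingEquiv.toMulEquiv).mp (by simpa using hp)

lemma prime_X_sub_mv {n : ℕ} {i j : Fin n} (hij : i ≠ j) : Prime (X i - X j : S n) := by
  classical
  set f : Fin n → S n := Function.update X j (X i - X j) with hf
  set τ : S n →ₐ[ℚ] S n := aeval f with hτ
  have hτX : ∀ k, τ (X k) = f k := fun k => aeval_X f k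
  have hfj : f j = X i - X j := Function.update_self _ _ _
  have hfk : ∀ k, k ≠ j → f k = X k := fun k hk => Function.update_of_ne hk _ _
  have hcomp : τ.comp τ = AlgHom.id ℚ (S n) := by
    apply MvPolynomial.algHom_ext
    intro k
    by_cases hk : k = j
    · subst hk
      simp only [AlgHom.comp_apply, hτX, hfj, map_sub, AlgHom.id_apply]
      rw [hfk i hij]
      ring
    · simp [AlgHom.comp_apply, hτX, hfk k hk]
  let e := AlgEquiv.ofAlgHom τ τ hcomp hcomp
  have he : e (X j) = X i - X j := by
    show τ (X j) = X i - X j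
    rw [hτX, hfj]
  have hp := (MulEquiv.prime_iff e.toRingEquiv.toMulEquiv).mpr (prime_X_mv j)
  simpa [he] using hp

lemma not_dvd_of_eval {n : ℕ} {a b : S n} (v : Fin n → ℚ)
    (ha : eval v a = 0) (hb : eval v b ≠ 0) : ¬ a ∣ b := by
  rintro ⟨c, rfl⟩
  exact hb (by rw [_root_.map_mul, ha, zero_mul])

lemma derivation_sum_apply {ι : Type*} (t : Finset ι)
    (D : ι → Derivation ℚ (S n) (S n)) (a : S n) :
    (∑ k ∈ t, D k) a = ∑ k ∈ t, D k a := by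
  classical
  induction t using Finset.induction_on with
  | empty => simp
  | @insert b t hb ih => rw [Finset.sum_insert hb, Finset.sum_insert hb, Derivation.add_apply, ih]

noncomputable def Vmat (n : ℕ) : Matrix (Fin n) (Fin n) (S n) :=
  Matrix.of fun i k : Fin n => X i ^ ((k : ℕ) + 1)

lemma prod_pairs {R : Type*} [CommMonoid R] (n : ℕ) (f : Fin n → Fin n → R) :
    ∏ p ∈ Finset.univ.filter (fun p : Fin n × Fin n => p.1 < p.2), f p.1 p.2
      = ∏ i : Fin n, ∏ j ∈ Finset.Ioi i, f i j := by
  rw [Finset.prod_sigma' Finset.univ (fun i => Finset.Ioi i) f]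
  refine (Finset.prod_bij (fun x _ => (x.1, x.2)) ?_ ?_ ?_ ?_).symm
  · rintro ⟨a, b⟩ ha
    simp only [Finset.mem_sigma, Finset.mem_Ioi] at ha
    simp [ha.2]
  · rintro ⟨a, b⟩ ha ⟨c, d⟩ hc h
    simp only [Prod.mk.injEq] at h
    exact Sigma.ext h.1 (by simp [h.2])
  · rintro ⟨a, b⟩ hab
    simp only [Finset.mem_filter] at hab
    exact ⟨⟨a, b⟩, by simp [hab.2], rfl⟩
  · intros; rfl

lemma det_Vmat (n : ℕ) :
    (Vmat n).det = (∏ i : Fin n, (X i : S n)) *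
      ∏ p ∈ Finset.univ.filter (fun p : Fin n × Fin n => p.1 < p.2), (X p.2 - X p.1 : S n) := by
  have hV : Vmat n = Matrix.diagonal (fun i : Fin n => (X i : S n))
      * Matrix.vandermonde (fun i : Fin n => (X i : S n)) := by
    ext i k
    rw [Matrix.diagonal_mul]
    simp [Vmat, Matrix.vandermonde_apply, pow_succ']
  rw [hV, Matrix.det_mul, Matrix.det_diagonal, Matrix.det_vandermonde,
    ← prod_pairs n (fun i j => (X j - X i : S n))]

lemma det_Vmat_dvd {n : ℕ} {z : S n} (hrow : ∀ i, (X i : S n) ∣ z)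
    (hpair : ∀ i j : Fin n, i < j → ((X j - X i : S n)) ∣ z) : (Vmat n).det ∣ z := by
  classical
  set g : Fin n ⊕ (Fin n × Fin n) → S n :=
    Sum.elim (fun i => X i) (fun q => X q.2 - X q.1) with hg
  set s : Finset (Fin n ⊕ (Fin n × Fin n)) :=
    (Finset.univ.image Sum.inl) ∪
      ((Finset.univ.filter fun q : Fin n × Fin n => q.1 < q.2).image Sum.inr) with hs
  have hcase : ∀ x ∈ s, (∃ i, x = Sum.inl i) ∨ ∃ a b : Fin n, a < b ∧ x = Sum.inr (a, b) := by
    intro x hx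
    rcases Finset.mem_union.1 hx with h | h
    · obtain ⟨i, -, rfl⟩ := Finset.mem_image.1 h; exact Or.inl ⟨i, rfl⟩
    · obtain ⟨q, hq, rfl⟩ := Finset.mem_image.1 h
      exact Or.inr ⟨q.1, q.2, (Finset.mem_filter.1 hq).2, rfl⟩
  have hprod : ∏ x ∈ s, g x = (Vmat n).det := by
    rw [det_Vmat, hs, Finset.prod_union (Finset.disjoint_left.2 ?_),
      Finset.prod_image (fun a _ b _ h => Sum.inl_injective h),
      Finset.prod_image (fun a _ b _ h => Sum.inr_injective h)]
    · simp [hg]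
    · rintro x hx hx'
      obtain ⟨i, -, rfl⟩ := Finset.mem_image.1 hx
      obtain ⟨q, -, hq⟩ := Finset.mem_image.1 hx'
      exact (Sum.inl_ne_inr hq.symm).elim
  rw [← hprod]
  refine prod_primes_dvd' g s ?_ ?_ z ?_
  · intro x hx
    rcases hcase x hx with ⟨i, rfl⟩ | ⟨a, b, hab, rfl⟩
    · simpa [hg] using prime_X_mv i
    · simpa [hg] using prime_X_sub_mv (i := b) (j := a) hab.ne'
  · intro x hx y hy hxy
    rcases hcase x hx with ⟨i, rfl⟩ | ⟨a, b, hab, rfl⟩ <;>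
      rcases hcase y hy with ⟨i', rfl⟩ | ⟨c, d, hcd, rfl⟩
    · -- X i ∤ X i'
      have hii : i ≠ i' := fun h => hxy (by rw [h])
      refine not_dvd_of_eval (fun k => if k = i' then 1 else 0) ?_ ?_ <;>
        simp [hg, hii]
    · -- X i ∤ X d - X c
      by_cases hid : i = d
      · subst hid
        refine not_dvd_of_eval (fun k => if k = c then 1 else 0) ?_ ?_ <;>
          simp [hg, hcd.ne, hcd.ne']
      · refine not_dvd_of_eval (fun k => if k = d then 1 else 0) ?_ ?_ <;>
          simp [hg, hid, hcd.ne]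
    · -- X b - X a ∤ X i'
      refine not_dvd_of_eval (fun _ => 1) ?_ ?_ <;> simp [hg]
    · -- X b - X a ∤ X d - X c
      have hne : (a, b) ≠ (c, d) := fun h => hxy (by rw [h])
      by_cases hc : c = a ∨ c = b
      · have hda : d ≠ a := by
          rcases hc with rfl | rfl
          · exact hcd.ne'
          · exact (hab.trans hcd).ne'
        have hdb : d ≠ b := by
          rcases hc with rfl | rfl
          · rintro rfl; exact hne rfl
          · exact hcd.ne'
        refine not_dvd_of_eval (fun k => if k = d then 1 else 0) ?_ ?_ <;>
          simp [hg, hda, hdb, hda.symm, hdb.symm, hcd.ne]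
      · push_neg at hc
        refine not_dvd_of_eval (fun k => if k = c then 1 else 0) ?_ ?_ <;>
          simp [hg, hc.1, hc.2, hc.1.symm, hc.2.symm, hcd.ne']
  · intro x hx
    rcases hcase x hx with ⟨i, rfl⟩ | ⟨a, b, hab, rfl⟩
    · simpa [hg] using hrow i
    · simpa [hg] using hpair a b hab

lemma det_Vmat_ne_zero (n : ℕ) : (Vmat n).det ≠ 0 := by
  rw [det_Vmat]
  refine mul_ne_zero ?_ ?_
  · exact Finset.prod_ne_zero_iff.2 fun i _ => (prime_X_mv i).ne_zero
  · exact Finset.prod_ne_zero_iff.2 fun q hq =>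
      (prime_X_sub_mv ((Finset.mem_filter.1 hq).2.ne')).ne_zero


/-- The module `D_n = D(A_n)` of logarithmic derivations of the essential braid
arrangement `A_n = {x_i = 0} ∪ {x_i = x_j} ⊆ ℚ^n`: derivations `θ` with
`θ(x_i) ∈ ⟨x_i⟩` for `1 ≤ i ≤ n` and `θ(x_i - x_j) ∈ ⟨x_i - x_j⟩` for
`1 ≤ i < j ≤ n`. -/
noncomputable def braidDer (n : ℕ) : Submodule (S n) (Derivation ℚ (S n) (S n)) where
  carrier := {θ | (∀ i : Fin n, X i ∣ θ (X i)) ∧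
    ∀ i j : Fin n, i < j → (X i - X j) ∣ θ (X i - X j)}
  add_mem' := by
    rintro a b ⟨ha1, ha2⟩ ⟨hb1, hb2⟩
    exact ⟨fun i => dvd_add (ha1 i) (hb1 i), fun i j hij => dvd_add (ha2 i j hij) (hb2 i j hij)⟩
  zero_mem' := by
    refine ⟨fun i => ?_, fun i j _ => ?_⟩ <;> simp
  smul_mem' := by
    rintro c θ ⟨h1, h2⟩
    refine ⟨fun i => ?_, fun i j hij => ?_⟩
    · simpa [smul_eq_mul] using (h1 i).mul_left c
    · simpa [smul_eq_mul] using (h2 i j hij).mul_left c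

/-- The derivation `θ_k = ∑_{i=1}^n x_i^k ∂/∂x_i`, i.e. the derivation determined by
`θ_k(x_i) = x_i^k`; here `k : Fin n` encodes the exponent `k + 1 ∈ {1, …, n}`. -/
noncomputable def powerDer (n : ℕ) (k : Fin n) : Derivation ℚ (S n) (S n) :=
  mkDerivation ℚ (fun i : Fin n => X i ^ ((k : ℕ) + 1))


set_option maxHeartbeats 1000000 in
/-- **Theorem (Terao; freeness of the essential braid arrangement)**: the derivations
`θ_k = ∑_{i=1}^n x_i^k ∂/∂x_i`, `k = 1, …, n`, lie in `D(A_n)` and form an `S`-basis of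
it; in particular `D(A_n)` is free of rank `n` with homogeneous generators of degrees
`1, 2, …, n`, so the essential braid arrangement is free with exponents `{1, …, n}`. -/
theorem braid_derivations_basis (n : ℕ) (hn : 1 ≤ n) :
    (∀ k : Fin n, powerDer n k ∈ braidDer n) ∧
      ∃ b : Module.Basis (Fin n) (S n) (braidDer n),
        ∀ k : Fin n, (b k : Derivation ℚ (S n) (S n)) = powerDer n k := by
  classical
  have hmem : ∀ k : Fin n, powerDer n k ∈ braidDer n := by
    intro k
    constructor
    · intro i
      rw [powerDer, mkDerivation_X]
      exact dvd_pow_self _ (Nat.succ_ne_zero _)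
    · intro i j _
      rw [powerDer, Derivation.map_sub, mkDerivation_X, mkDerivation_X]
      exact sub_dvd_pow_sub_pow _ _ _
  refine ⟨hmem, ?_⟩
  have hdet : (Vmat n).det ≠ 0 := det_Vmat_ne_zero n
  -- evaluation of a combination of the powerDer's on X i
  have happ : ∀ (c : Fin n → S n) (i : Fin n),
      (∑ k, c k • powerDer n k) (X i) = (Vmat n).mulVec c i := by
    intro c i
    rw [derivation_sum_apply]
    simp only [Derivation.smul_apply, powerDer, mkDerivation_X, smul_eq_mul]
    simp [Matrix.mulVec, dotProduct, Vmat, mul_comm]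
  -- key: every element of braidDer is a combination of the powerDer's
  have key : ∀ θ : Derivation ℚ (S n) (S n), θ ∈ braidDer n →
      ∃ c : Fin n → S n, θ = ∑ k, c k • powerDer n k := by
    intro θ hθ
    set p : Fin n → S n := fun i => θ (X i) with hp
    have h1 : ∀ i, X i ∣ p i := hθ.1
    have h2 : ∀ i j, i ≠ j → (X i - X j : S n) ∣ p i - p j := by
      intro i j hij
      rcases lt_or_gt_of_ne hij with h | h
      · have := hθ.2 i j h
        rwa [Derivation.map_sub] at this
      · have := hθ.2 j i h
        rw [Derivation.map_sub] at this
        rw [show (X i - X j : S n) = -(X j - X i) by ring,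
          show p i - p j = -(p j - p i) by ring]
        exact neg_dvd.mpr (dvd_neg.mpr this)
    have hdvd : ∀ k, (Vmat n).det ∣ cramer (Vmat n) p k := by
      intro k
      rw [cramer_apply]
      refine det_Vmat_dvd (fun i => ?_) (fun i j hij => ?_)
      · refine dvd_det_of_dvd_row _ i fun c => ?_
        rw [Matrix.updateCol_apply]
        split
        · exact h1 i
        · exact dvd_pow_self _ (Nat.succ_ne_zero _)
      · refine dvd_det_of_dvd_rows_sub _ hij.ne' fun c => ?_
        rw [Matrix.updateCol_apply, Matrix.updateCol_apply]
        split
        · exact h2 j i hij.ne'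
        · show (X j - X i : S n) ∣ Vmat n j c - Vmat n i c
          exact sub_dvd_pow_sub_pow _ _ _
    choose c hc using hdvd
    have hcr : cramer (Vmat n) p = (Vmat n).det • c := funext fun k => by
      rw [hc k]; rfl
    have hmv : (Vmat n).mulVec c = p := by
      have h := mulVec_cramer (Vmat n) p
      rw [hcr, mulVec_smul] at h
      funext i
      have := congrFun h i
      simp only [Pi.smul_apply, smul_eq_mul] at this
      exact mul_left_cancel₀ hdet this
    refine ⟨c, derivation_ext fun i => ?_⟩
    rw [happ c i, hmv]
  -- the linear equivalence with (Fin n → S n)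
  let Φ : (Fin n → S n) →ₗ[S n] braidDer n :=
    { toFun := fun c => ⟨∑ k, c k • powerDer n k,
        Submodule.sum_mem _ fun k _ => Submodule.smul_mem _ _ (hmem k)⟩
      map_add' := by
        intro c d
        apply Subtype.ext
        simp [add_smul, Finset.sum_add_distrib]
      map_smul' := by
        intro r c
        apply Subtype.ext
        simp [Finset.smul_sum, smul_smul] }
  have hΦapply : ∀ c, (Φ c : Derivation ℚ (S n) (S n)) = ∑ k, c k • powerDer n k :=
    fun c => rfl
  have hinj : Function.Injective Φ := by
    intro c d hcd
    have hsum : ∑ k, c k • powerDer n k = ∑ k, d k • powerDer n k := by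
      have := congrArg (Submodule.subtype (braidDer n)) hcd
      simpa [hΦapply] using this
    have hvec : (Vmat n).mulVec c = (Vmat n).mulVec d := funext fun i => by
      have := congrArg (fun D : Derivation ℚ (S n) (S n) => D (X i)) hsum
      simpa [happ] using this
    funext k
    have h0 : (Vmat n).det • c = (Vmat n).det • d := by
      have h := congrArg (fun w => ((Vmat n).adjugate).mulVec w) hvec
      simpa [Matrix.mulVec_mulVec, Matrix.adjugate_mul, Matrix.smul_mulVec,
        Matrix.one_mulVec] using h
    have := congrFun h0 k
    simp only [Pi.smul_apply, smul_eq_mul] at this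
    exact mul_left_cancel₀ hdet this
  have hsurj : Function.Surjective Φ := by
    rintro ⟨θ, hθ⟩
    obtain ⟨c, hc⟩ := key θ hθ
    exact ⟨c, Subtype.ext (by rw [hΦapply, ← hc])⟩
  let e := LinearEquiv.ofBijective Φ ⟨hinj, hsurj⟩
  refine ⟨(Pi.basisFun (S n) (Fin n)).map e, fun k => ?_⟩
  have h1 : ((Pi.basisFun (S n) (Fin n)).map e k : Derivation ℚ (S n) (S n))
      = ∑ j, (Pi.single k (1 : S n) : Fin n → S n) j • powerDer n j := by
    rw [Module.Basis.map_apply]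
    have h2 : (Pi.basisFun (S n) (Fin n)) k = Pi.single k 1 := by
      ext j
      simp [Pi.basisFun_apply]
    rw [h2]
    have h3 := hΦapply (Pi.single k 1)
    exact h3
  rw [h1, Finset.sum_eq_single k]
  · simp
  · intro j _ hj
    simp [Pi.single_apply, hj]
  · simp
end
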